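/- Let Coin be a type, count : Coin → ℕ+ a bijection, idx : Address × Coin → ℕ+ with idx(a,·) bijective for each address a, sum : ℕ and bal : Address → ℕ. Define active = {c : count(c) ≤ sum} and hc = {(a,c) : idx(a,c) ≤ bal(a)}, and suppose the invariants hold: every owned coin is active, every active coin is owned by some address, and no coin is owned by two distinct addresses. Then Σ_a bal(a) = sum (the sum over addresses with bal(a) > 0, which is assumed finite). -/

import Mathlib

theorem stmt9 {Address Coin : Type*} (count : Coin → ℕ+) (idx : Address → Coin → ℕ+)
    (hcount : Function.Bijective count) (hidx : ∀ a, Function.Bijective (idx a))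
    (sum : ℕ) (bal : Address → ℕ) (S : Finset Address) (hS : ∀ a ∉ S, bal a = 0)
    (inv1 : ∀ a c, (idx a c : ℕ) ≤ bal a → (count c : ℕ) ≤ sum)
    (inv2 : ∀ c, (count c : ℕ) ≤ sum → ∃ a, (idx a c : ℕ) ≤ bal a)
    (inv3 : ∀ a b c, (idx a c : ℕ) ≤ bal a → (idx b c : ℕ) ≤ bal b → a = b) :
    ∑ a ∈ S, bal a = sum := by
  classical
  let eidx : Address → Coin ≃ ℕ+ := fun a => Equiv.ofBijective _ (hidx a)
  let ecount : Coin ≃ ℕ+ := Equiv.ofBijective _ hcount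
  -- the coin owned by address a with index i
  let coin : ∀ (a : Address) (i : ℕ), Coin := fun a i => (eidx a).symm ⟨i + 1, Nat.succ_pos _⟩
  have hcoin : ∀ a i, (idx a (coin a i) : ℕ) = i + 1 := by
    intro a i
    have : idx a (coin a i) = ⟨i + 1, Nat.succ_pos _⟩ := (eidx a).apply_symm_apply _
    exact congrArg _ this
  have hlt : ∀ p : (Σ a : S, Fin (bal (a : Address))),
      (count (coin p.1 p.2) : ℕ) - 1 < sum := by
    intro p
    have h1 : (idx p.1 (coin p.1 p.2) : ℕ) ≤ bal p.1 := by
      rw [hcoin]; exact p.2.2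
    have h2 := inv1 _ _ h1
    have h3 := (count (coin p.1 p.2)).pos
    omega
  let f : (Σ a : S, Fin (bal (a : Address))) → Fin sum :=
    fun p => ⟨(count (coin p.1 p.2) : ℕ) - 1, hlt p⟩
  have hbij : Function.Bijective f := by
    constructor
    · rintro ⟨a, i⟩ ⟨b, j⟩ hfe
      have hpos1 := (count (coin a i)).pos
      have hpos2 := (count (coin b j)).pos
      have h1 : (count (coin a i) : ℕ) = (count (coin b j) : ℕ) := by
        have h0 := congrArg Fin.val hfe
        simp only [f] at h0
        omega
      have hc : coin (a : Address) i = coin (b : Address) j :=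
        hcount.injective (PNat.coe_injective h1)
      have hia : (idx a (coin a i) : ℕ) ≤ bal a := by rw [hcoin]; exact i.2
      have hib : (idx b (coin b j) : ℕ) ≤ bal b := by rw [hcoin]; exact j.2
      have hab : (a : Address) = b := inv3 _ _ _ hia (hc ▸ hib)
      have hab' : a = b := Subtype.ext hab
      subst hab'
      have hij : (i : ℕ) = j := by
        have := congrArg (fun c => (idx (a : Address) c : ℕ)) hc
        simp only [hcoin] at this
        omega
      simp [Fin.ext_iff, hij]
    · rintro ⟨k, hk⟩
      set c := ecount.symm ⟨k + 1, Nat.succ_pos _⟩ with hc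
      have hcc : (count c : ℕ) = k + 1 := by
        have : count c = ⟨k + 1, Nat.succ_pos _⟩ := ecount.apply_symm_apply _
        exact congrArg _ this
      obtain ⟨a, ha⟩ := inv2 c (by omega)
      have hpos := (idx a c).pos
      have haS : a ∈ S := by
        by_contra h
        have := hS a h
        omega
      have hil : (idx a c : ℕ) - 1 < bal a := by omega
      refine ⟨⟨⟨a, haS⟩, ⟨(idx a c : ℕ) - 1, hil⟩⟩, ?_⟩
      have hcoinc : coin a ((idx a c : ℕ) - 1) = c := by
        apply (hidx a).injective
        apply PNat.coe_injective
        · show ((idx a (coin a _) : ℕ+) : ℕ) = _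
          rw [hcoin]; omega
      simp only [f, Fin.ext_iff]
      rw [hcoinc, hcc]
      omega
  have e : (Σ a : S, Fin (bal (a : Address))) ≃ Fin sum := Equiv.ofBijective f hbij
  have := Fintype.card_congr e
  simpa [Fintype.card_sigma, Finset.sum_attach] using this
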